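/- arXiv:2205.00394 — 5 statements merged into one kernel-verified Lean document; each statement's English description precedes it below -/
import Mathlib

section
/- Let X ⊂ ℝⁿ be compact with 0 in its interior, and let f : X → ℝᵈ be continuous with f(0) = 0 and f continuously differentiable on a neighborhood of 0. Then for every ε > 0 there exists a continuously differentiable function g : ℝⁿ → ℝᵈ such that g(0) = 0, the derivative of g at 0 is the zero linear map, and sup_{x ∈ X} ‖f(x) − (Df(0))x − g(x)‖₁ < ε, where ‖·‖₁ denotes the ℓ¹ norm on ℝᵈ and Df(0) is the Jacobian of f at 0. -/
open Metric Set MvPolynomial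

/-- Corollary 1 (approximation of locally C¹ functions). -/
theorem stmt_0 {n d : ℕ} (X : Set (Fin n → ℝ)) (hX : IsCompact X)
    (h0 : (0 : Fin n → ℝ) ∈ interior X)
    (f : (Fin n → ℝ) → (Fin d → ℝ))
    (hf : ContinuousOn f X) (hf0 : f 0 = 0)
    (hf1 : ∃ U ∈ nhds (0 : Fin n → ℝ), ContDiffOn ℝ 1 f U)
    (ε : ℝ) (hε : 0 < ε) :
    ∃ g : (Fin n → ℝ) → (Fin d → ℝ), ContDiff ℝ 1 g ∧ g 0 = 0 ∧
      fderiv ℝ g 0 = 0 ∧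
      ∀ x ∈ X, ∑ i, |f x i - fderiv ℝ f 0 x i - g x i| < ε := by
  obtain ⟨U, hU, hfU⟩ := hf1
  set A := fderiv ℝ f 0 with hA
  have hdf : DifferentiableAt ℝ f 0 := (hfU.contDiffAt hU).differentiableAt one_ne_zero
  -- the function h = f - A
  set h : (Fin n → ℝ) → (Fin d → ℝ) := fun x => f x - A x with hh
  have hhcont : ContinuousOn h X := hf.sub (A.continuous.continuousOn)
  -- radius
  obtain ⟨r, hr, hrU⟩ : ∃ r > 0, closedBall (0 : Fin n → ℝ) r ⊆ interior U :=
    Metric.nhds_basis_closedBall.mem_iff.1 (interior_mem_nhds.2 hU)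
  set ψ : ContDiffBump (0 : Fin n → ℝ) := ⟨r / 2, r, by positivity, by linarith⟩ with hψ
  -- Stone-Weierstrass approximation
  haveI : CompactSpace X := isCompact_iff_compactSpace.1 hX
  haveI : Nonempty X := ⟨⟨0, interior_subset h0⟩⟩
  set coord : Fin n → C(X, ℝ) := fun i => ⟨fun x => (x : Fin n → ℝ) i, by
    exact (continuous_apply i).comp continuous_subtype_val⟩ with hcoord
  set Φ : MvPolynomial (Fin n) ℝ →ₐ[ℝ] C(X, ℝ) := aeval coord with hΦ
  have hΦeval : ∀ (p : MvPolynomial (Fin n) ℝ) (x : X),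
      Φ p x = eval (x : Fin n → ℝ) p := by
    intro p x
    have hcomp : (ContinuousMap.evalAlgHom ℝ ℝ x).comp Φ
        = aeval (fun i => (x : Fin n → ℝ) i) := by
      apply MvPolynomial.algHom_ext
      intro i
      simp [hΦ, hcoord]
    have h1 : Φ p x = aeval (fun i => (x : Fin n → ℝ) i) p :=
      DFunLike.congr_fun hcomp p
    rw [h1]
    rfl
  have hsep : (Φ.range).SeparatesPoints := by
    intro x y hxy
    have : (x : Fin n → ℝ) ≠ y := Subtype.coe_injective.ne hxy
    obtain ⟨i, hi⟩ : ∃ i, (x : Fin n → ℝ) i ≠ (y : Fin n → ℝ) i := by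
      by_contra hc
      push_neg at hc
      exact this (funext hc)
    refine ⟨coord i, ⟨coord i, ⟨MvPolynomial.X i, by simp [hΦ]⟩, rfl⟩, ?_⟩
    simpa [hcoord] using hi
  have key : ∀ i : Fin d, ∃ p : MvPolynomial (Fin n) ℝ,
      ∀ x ∈ X, |eval x p - h x i| ≤ ε / (d + 1) := by
    intro i
    have hcont : Continuous fun x : X => h (x : Fin n → ℝ) i :=
      (continuous_apply i).comp hhcont.restrict
    obtain ⟨q, hq⟩ := ContinuousMap.exists_mem_subalgebra_near_continuous_of_separatesPoints
      Φ.range hsep (fun x : X => h (x : Fin n → ℝ) i) hcont (ε / (d + 1)) (by positivity)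
    obtain ⟨p, hp⟩ := q.2
    refine ⟨p, fun x hx => ?_⟩
    have h1 := hq ⟨x, hx⟩
    have h2 : eval x p = (q : C(X, ℝ)) ⟨x, hx⟩ := by
      rw [← hΦeval p ⟨x, hx⟩]
      exact DFunLike.congr_fun hp ⟨x, hx⟩
    rw [h2]
    exact le_of_lt (by simpa [Real.norm_eq_abs] using h1)
  choose p hp using key
  -- the approximant
  set g : (Fin n → ℝ) → (Fin d → ℝ) :=
    fun x i => ψ x * h x i + (1 - ψ x) * eval x (p i) with hg
  have hPsmooth : ∀ i, ContDiff ℝ 1 fun x : Fin n → ℝ => eval x (p i) := fun i =>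
    (AnalyticOnNhd.eval_mvPolynomial (p i)).contDiff
  have hψsmooth : ContDiff ℝ 1 (fun x => ψ x) := ψ.contDiff
  have hgsmooth : ContDiff ℝ 1 g := by
    rw [contDiff_pi]
    intro i
    have h1 : ContDiff ℝ 1 fun x => ψ x * h x i := by
      rw [contDiff_iff_contDiffAt]
      intro x
      rcases em (x ∈ interior U) with hx | hx
      · have hUx : U ∈ nhds x := mem_interior_iff_mem_nhds.1 hx
        have : ContDiffAt ℝ 1 f x := hfU.contDiffAt hUx
        have hfi : ContDiffAt ℝ 1 (fun y => f y i) x := (contDiffAt_pi.1 this) i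
        have hAi : ContDiffAt ℝ 1 (fun y => A y i) x :=
          ((contDiff_pi.1 A.contDiff) i).contDiffAt
        exact (hψsmooth.contDiffAt).mul ((hfi.sub hAi))
      · have hx' : x ∉ tsupport (fun y => ψ y) := by
          intro hmem
          have : x ∈ closedBall (0 : Fin n → ℝ) r := by
            have := ψ.tsupport_eq
            rw [show (fun y => ψ y) = ⇑ψ from rfl, this] at hmem
            exact hmem
          exact hx (hrU this)
        have hopen : (tsupport fun y => ψ y)ᶜ ∈ nhds x :=
          (isClosed_tsupport _).isOpen_compl.mem_nhds hx'
        have heq : (fun y => ψ y * h y i) =ᶠ[nhds x] fun _ => 0 := by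
          filter_upwards [hopen] with y hy
          have : ψ y = 0 := image_eq_zero_of_notMem_tsupport hy
          simp [this]
        exact (contDiffAt_const (c := 0)).congr_of_eventuallyEq heq
    exact h1.add (((contDiff_const.sub hψsmooth).mul (hPsmooth i)))
  -- g = h near 0
  have hnear : g =ᶠ[nhds 0] h := by
    filter_upwards [Metric.closedBall_mem_nhds (0 : Fin n → ℝ) (by positivity : (0:ℝ) < r/2)]
      with y hy
    have : ψ y = 1 := ψ.one_of_mem_closedBall hy
    funext i
    simp [hg, this]
  have hg0 : g 0 = 0 := by
    have h0' : h 0 = 0 := by simp [hh, hf0]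
    have := hnear.eq_of_nhds
    rw [this, h0']
  have hdg : fderiv ℝ g 0 = 0 := by
    rw [hnear.fderiv_eq]
    have : fderiv ℝ h 0 = A - A := by
      rw [hh]
      rw [fderiv_fun_sub hdf A.differentiableAt, A.fderiv, hA]
    rw [this, sub_self]
  refine ⟨g, hgsmooth, hg0, hdg, fun x hx => ?_⟩
  have hbound : ∀ i : Fin d, |f x i - A x i - g x i| ≤ ε / (d + 1) := by
    intro i
    have : f x i - A x i - g x i = (1 - ψ x) * (h x i - eval x (p i)) := by
      simp only [hg, hh, Pi.sub_apply]
      ring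
    rw [this, abs_mul]
    have h1 : |1 - ψ x| ≤ 1 := by
      rw [abs_le]
      constructor <;> nlinarith [ψ.nonneg (x := x), ψ.le_one (x := x)]
    have h2 : |h x i - eval x (p i)| ≤ ε / (d + 1) := by
      rw [abs_sub_comm]; exact hp i x hx
    calc |1 - ψ x| * |h x i - eval x (p i)| ≤ 1 * (ε / (d + 1)) :=
          mul_le_mul h1 h2 (abs_nonneg _) zero_le_one
      _ = ε / (d + 1) := one_mul _
  calc ∑ i, |f x i - A x i - g x i| ≤ ∑ _i : Fin d, ε / (d + 1) :=
        Finset.sum_le_sum fun i _ => hbound i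
    _ = d * (ε / (d + 1)) := by simp [mul_comm]
    _ < ε := by
        rw [mul_div_assoc']
        rw [div_lt_iff₀ (by positivity)]
        nlinarith
end

section
/- Let X ⊂ ℝⁿ be compact with 0 in its interior, and let f : X → ℝᵈ be continuous with f(0) = 0 and f continuously differentiable on a neighborhood of 0. Let S be a family of continuously differentiable functions N : ℝⁿ → ℝᵈ with the universal approximation property: for every C¹ function g : ℝⁿ → ℝᵈ and every δ > 0, there exists N ∈ S with sup_{x ∈ X} ‖g(x) − N(x)‖₁ < δ and sup_{x ∈ X} ‖Dg(x) − DN(x)‖₁,₁ < δ, where ‖A‖₁,₁ denotes the sum of absolute values of the entries of the matrix A. Then for every ε > 0 there exists N ∈ S such that for all x ∈ X, ‖f(x) − ([Df(0) − DN(0)]x + N(x) − N(0))‖₁ < ε. -/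
open scoped Topology

lemma approx_scalar {n : ℕ} (X : Set (Fin n → ℝ)) (hX : IsCompact X)
    (f : (Fin n → ℝ) → ℝ) (hf : ContinuousOn f X) (δ : ℝ) (hδ : 0 < δ) :
    ∃ p : (Fin n → ℝ) → ℝ, ContDiff ℝ 1 p ∧ ∀ x ∈ X, |p x - f x| < δ := by
  haveI : CompactSpace X := isCompact_iff_compactSpace.mp hX
  let A : Subalgebra ℝ C(X, ℝ) :=
  { carrier := { g : C(X, ℝ) | ∃ H : (Fin n → ℝ) → ℝ, ContDiff ℝ 1 H ∧ ∀ x : X, H ↑x = g x }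
    mul_mem' := by
      rintro a b ⟨H1, h1, e1⟩ ⟨H2, h2, e2⟩
      exact ⟨fun v => H1 v * H2 v, h1.mul h2, fun x => by simp [e1 x, e2 x]⟩
    add_mem' := by
      rintro a b ⟨H1, h1, e1⟩ ⟨H2, h2, e2⟩
      exact ⟨fun v => H1 v + H2 v, h1.add h2, fun x => by simp [e1 x, e2 x]⟩
    algebraMap_mem' := fun r => ⟨fun _ => r, contDiff_const, fun x => rfl⟩ }
  have w : A.SeparatesPoints := by
    rintro x y hxy
    have hxy' : (x : Fin n → ℝ) ≠ (y : Fin n → ℝ) := Subtype.coe_ne_coe.mpr hxy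
    obtain ⟨j, hj⟩ : ∃ j, (x : Fin n → ℝ) j ≠ (y : Fin n → ℝ) j := by
      by_contra h
      push_neg at h
      exact hxy' (funext h)
    refine ⟨fun z : X => (z : Fin n → ℝ) j, ⟨⟨fun z : X => (z : Fin n → ℝ) j,
      (Continuous.comp (continuous_apply j) continuous_subtype_val : _)⟩,
      ⟨fun v => v j, (contDiff_pi.mp contDiff_id) j, fun _ => rfl⟩, rfl⟩, hj⟩
  obtain ⟨g, hg⟩ := ContinuousMap.exists_mem_subalgebra_near_continuous_of_separatesPoints A w
    (fun x : X => f x) (hf.restrict) δ hδ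
  obtain ⟨H, hH, he⟩ := g.2
  refine ⟨H, hH, fun x hx => ?_⟩
  have := hg ⟨x, hx⟩
  rw [← he ⟨x, hx⟩] at this
  simpa using this

lemma approx_vec {n d : ℕ} (X : Set (Fin n → ℝ)) (hX : IsCompact X)
    (f : (Fin n → ℝ) → (Fin d → ℝ)) (hf : ContinuousOn f X) (δ : ℝ) (hδ : 0 < δ) :
    ∃ p : (Fin n → ℝ) → (Fin d → ℝ), ContDiff ℝ 1 p ∧
      ∀ x ∈ X, ∑ i, |p x i - f x i| < δ := by
  have hδ' : 0 < δ / (d + 1) := by positivity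
  have hc : ∀ i : Fin d, ∃ p : (Fin n → ℝ) → ℝ, ContDiff ℝ 1 p ∧
      ∀ x ∈ X, |p x - f x i| < δ / (d + 1) := fun i =>
    approx_scalar X hX (fun x => f x i) ((continuous_apply i).comp_continuousOn hf) _ hδ'
  choose P hP hPa using hc
  refine ⟨fun x i => P i x, contDiff_pi.mpr hP, fun x hx => ?_⟩
  calc ∑ i, |P i x - f x i| ≤ ∑ _i : Fin d, δ / (d + 1) :=
        Finset.sum_le_sum fun i _ => (hPa i x hx).le
    _ = (d : ℝ) * (δ / (d + 1)) := by simp [mul_comm]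
    _ < δ := by
        rw [mul_div_assoc']
        rw [div_lt_iff₀ (by positivity)]
        nlinarith [hδ]

lemma glue_smul {n d : ℕ} (V : Set (Fin n → ℝ)) (hV : IsOpen V)
    (h : (Fin n → ℝ) → (Fin d → ℝ)) (hh : ContDiffOn ℝ 1 h V)
    (χ : (Fin n → ℝ) → ℝ) (hχ : ContDiff ℝ 1 χ) (hsupp : tsupport χ ⊆ V) :
    ContDiff ℝ 1 (fun x => χ x • h x) := by
  rw [← contDiffOn_univ]
  apply contDiffOn_of_locally_contDiffOn
  intro x _
  by_cases hx : x ∈ V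
  · exact ⟨V, hV, hx, (hχ.contDiffOn.smul hh).mono (by simp)⟩
  · refine ⟨(tsupport χ)ᶜ, (isClosed_tsupport χ).isOpen_compl,
      fun hc => hx (hsupp hc), ?_⟩
    apply (contDiffOn_const (c := (0 : Fin d → ℝ))).congr
    intro y hy
    have h0 : χ y = 0 := image_eq_zero_of_notMem_tsupport hy.2
    simp [h0]

/-- Theorem 1 (approximation capacity of the "Jacobian" QRnet architecture). -/
theorem stmt_2 {n d : ℕ} (X : Set (Fin n → ℝ)) (hX : IsCompact X)
    (h0 : (0 : Fin n → ℝ) ∈ interior X)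
    (f : (Fin n → ℝ) → (Fin d → ℝ))
    (hf : ContinuousOn f X) (hf0 : f 0 = 0)
    (hf1 : ∃ U ∈ nhds (0 : Fin n → ℝ), ContDiffOn ℝ 1 f U)
    (S : Set ((Fin n → ℝ) → (Fin d → ℝ)))
    (hS : ∀ N ∈ S, ContDiff ℝ 1 N)
    (hUA : ∀ g : (Fin n → ℝ) → (Fin d → ℝ), ContDiff ℝ 1 g → ∀ δ > 0,
      ∃ N ∈ S, (∀ x ∈ X, ∑ i, |g x i - N x i| < δ) ∧
        (∀ x ∈ X, ∑ i, ∑ j, |fderiv ℝ g x (Pi.single j 1) i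
          - fderiv ℝ N x (Pi.single j 1) i| < δ))
    (ε : ℝ) (hε : 0 < ε) :
    ∃ N ∈ S, ∀ x ∈ X,
      ∑ i, |f x i - ((fderiv ℝ f 0 x i - fderiv ℝ N 0 x i)
        + N x i - N 0 i)| < ε := by
  have h0X : (0 : Fin n → ℝ) ∈ X := interior_subset h0
  obtain ⟨U, hU, hfU⟩ := hf1
  have hV : IsOpen (interior U) := isOpen_interior
  have h0V : (0 : Fin n → ℝ) ∈ interior U := mem_interior_iff_mem_nhds.mpr hU
  have hfV : ContDiffOn ℝ 1 f (interior U) := hfU.mono interior_subset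
  obtain ⟨r, hr, hrV⟩ := Metric.nhds_basis_closedBall.mem_iff.mp (hV.mem_nhds h0V)
  have hr2 : (0:ℝ) < r / 2 := by linarith
  let χ : ContDiffBump (0 : Fin n → ℝ) := ⟨r/2, r, hr2, by linarith⟩
  -- bound on X
  obtain ⟨R0, hR0⟩ := hX.isBounded.subset_closedBall 0
  set R : ℝ := max R0 0 with hRdef
  have hRnn : 0 ≤ R := le_max_right _ _
  have hRX : ∀ x ∈ X, ∀ j, |x j| ≤ R := by
    intro x hx j
    have h1 : ‖x‖ ≤ R0 := by
      simpa [Metric.mem_closedBall, dist_zero_right] using hR0 hx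
    calc |x j| = ‖x j‖ := (Real.norm_eq_abs _).symm
      _ ≤ ‖x‖ := norm_le_pi_norm x j
      _ ≤ R := h1.trans (le_max_left _ _)
  -- C¹ approximation of f on X
  obtain ⟨p, hp, hpa⟩ := approx_vec X hX f hf (ε/4) (by positivity)
  -- glued function g
  set g : (Fin n → ℝ) → Fin d → ℝ := fun x => p x + χ x • (f x - p x) with hgdef
  have hg : ContDiff ℝ 1 g := by
    refine hp.add (glue_smul (interior U) hV _ (hfV.sub hp.contDiffOn) _
      χ.contDiff ?_)
    rw [χ.tsupport_eq]
    exact hrV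
  have hgf : g =ᶠ[𝓝 (0 : Fin n → ℝ)] f := by
    filter_upwards [Metric.closedBall_mem_nhds (0 : Fin n → ℝ) hr2] with x hx
    have h1 : χ x = 1 := χ.one_of_mem_closedBall hx
    simp [hgdef, h1]
  have hg0 : g 0 = 0 := by rw [hgf.self_of_nhds, hf0]
  have hD : fderiv ℝ g 0 = fderiv ℝ f 0 := hgf.fderiv_eq
  -- g close to f on X
  have hgfX : ∀ x ∈ X, ∑ i, |f x i - g x i| < ε / 4 := by
    intro x hx
    refine lt_of_le_of_lt (Finset.sum_le_sum fun i _ => ?_) (hpa x hx)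
    have he : f x i - g x i = (1 - χ x) * (f x i - p x i) := by
      simp only [hgdef, Pi.add_apply, Pi.smul_apply, Pi.sub_apply, smul_eq_mul]
      ring
    rw [he, abs_mul, abs_sub_comm (f x i) (p x i)]
    have h1 : |1 - χ x| ≤ 1 := abs_le.mpr ⟨by linarith [χ.le_one (x := x)],
      by linarith [χ.nonneg (x := x)]⟩
    calc |1 - χ x| * |p x i - f x i| ≤ 1 * |p x i - f x i| :=
          mul_le_mul_of_nonneg_right h1 (abs_nonneg _)
      _ = |p x i - f x i| := one_mul _
  -- apply universal approximation
  set δ : ℝ := min (ε/4) (ε/(4*(R+1))) with hδdef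
  have hδ : 0 < δ := lt_min (by positivity) (by positivity)
  obtain ⟨N, hNS, hN1, hN2⟩ := hUA g hg δ hδ
  refine ⟨N, hNS, fun x hx => ?_⟩
  rw [← hD]
  set B : (Fin n → ℝ) →L[ℝ] (Fin d → ℝ) := fderiv ℝ g 0 - fderiv ℝ N 0 with hBdef
  -- decompose B x
  have hBx : ∀ i, B x i = ∑ j, x j * B (Pi.single j 1) i := by
    intro i
    have hx' : x = ∑ j, x j • (Pi.single j 1 : Fin n → ℝ) := by
      conv_lhs => rw [← Finset.univ_sum_single x]
      refine Finset.sum_congr rfl fun j _ => ?_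
      rw [← Pi.single_smul, smul_eq_mul, mul_one]
    conv_lhs => rw [hx']
    rw [map_sum]
    rw [Finset.sum_apply]
    congr 1
    funext j
    rw [map_smul]
    simp
  have hBxbound : ∑ i, |B x i| ≤ R * ∑ i, ∑ j, |fderiv ℝ g 0 (Pi.single j 1) i
      - fderiv ℝ N 0 (Pi.single j 1) i| := by
    rw [Finset.mul_sum]
    refine Finset.sum_le_sum fun i _ => ?_
    rw [hBx i, Finset.mul_sum]
    refine le_trans (Finset.abs_sum_le_sum_abs _ _) (Finset.sum_le_sum fun j _ => ?_)
    rw [abs_mul]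
    have hB' : |B (Pi.single j 1) i| = |fderiv ℝ g 0 (Pi.single j 1) i
        - fderiv ℝ N 0 (Pi.single j 1) i| := by
      simp [hBdef]
    rw [hB']
    exact mul_le_mul_of_nonneg_right (hRX x hx j) (abs_nonneg _)
  -- final estimate
  have key : ∀ i, |f x i - ((fderiv ℝ g 0 x i - fderiv ℝ N 0 x i) + N x i - N 0 i)|
      ≤ |f x i - g x i| + |g x i - N x i| + |g 0 i - N 0 i| + |B x i| := by
    intro i
    have hg0i : g 0 i = 0 := by rw [hg0]; rfl
    have hBxi : B x i = fderiv ℝ g 0 x i - fderiv ℝ N 0 x i := by simp [hBdef]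
    have : f x i - ((fderiv ℝ g 0 x i - fderiv ℝ N 0 x i) + N x i - N 0 i)
        = (f x i - g x i) + (g x i - N x i) - (g 0 i - N 0 i) - B x i := by
      rw [hBxi, hg0i]; ring
    rw [this]
    calc |(f x i - g x i) + (g x i - N x i) - (g 0 i - N 0 i) - B x i|
        ≤ |(f x i - g x i) + (g x i - N x i) - (g 0 i - N 0 i)| + |B x i| :=
          abs_sub _ _
      _ ≤ |(f x i - g x i) + (g x i - N x i)| + |g 0 i - N 0 i| + |B x i| := by
          linarith [abs_sub ((f x i - g x i) + (g x i - N x i)) ((g 0 i - N 0 i))]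
      _ ≤ |f x i - g x i| + |g x i - N x i| + |g 0 i - N 0 i| + |B x i| := by
          linarith [abs_add_le (f x i - g x i) (g x i - N x i)]
  calc ∑ i, |f x i - ((fderiv ℝ g 0 x i - fderiv ℝ N 0 x i) + N x i - N 0 i)|
      ≤ ∑ i, (|f x i - g x i| + |g x i - N x i| + |g 0 i - N 0 i| + |B x i|) :=
        Finset.sum_le_sum fun i _ => key i
    _ = (∑ i, |f x i - g x i|) + (∑ i, |g x i - N x i|) + (∑ i, |g 0 i - N 0 i|)
        + ∑ i, |B x i| := by
        simp [Finset.sum_add_distrib]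
    _ < ε/4 + δ + δ + ∑ i, |B x i| := by
        have := hgfX x hx
        have h2 := hN1 x hx
        have h3 := hN1 0 h0X
        linarith
    _ ≤ ε/4 + ε/4 + ε/4 + ε/4 := by
        have hd1 : δ ≤ ε/4 := min_le_left _ _
        have hd2 : δ ≤ ε/(4*(R+1)) := min_le_right _ _
        have h5 : R * ∑ i, ∑ j, |fderiv ℝ g 0 (Pi.single j 1) i
            - fderiv ℝ N 0 (Pi.single j 1) i| ≤ R * δ :=
          mul_le_mul_of_nonneg_left (hN2 0 h0X).le hRnn
        have h6 : R * δ ≤ ε/4 := by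
          calc R * δ ≤ R * (ε/(4*(R+1))) := mul_le_mul_of_nonneg_left hd2 hRnn
            _ ≤ ε/4 := by
              rw [mul_div_assoc', div_le_div_iff₀ (by positivity) (by positivity)]
              nlinarith
        linarith [hBxbound]
    _ = ε := by ring
end

section
/- Let X ⊂ ℝⁿ be compact, convex (or star-shaped with respect to 0), with 0 in its interior, and let f : X → ℝᵈ be continuous with f(0) = 0 and f continuously differentiable on a neighborhood of 0. Let S be a family of continuous matrix-valued functions N : ℝⁿ → ℝ^{d×n} with the universal approximation property: for every continuous h : X → ℝ^{d×n} and every δ > 0 there exists N ∈ S with sup_{x ∈ X} ‖h(x) − N(x)‖₁,₁ < δ, where ‖A‖₁,₁ denotes the sum of absolute values of the entries of A. Then for every ε > 0 there exists N ∈ S such that for all x ∈ X, ‖f(x) − [Df(0) + N(x) − N(0)]x‖₁ < ε. -/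
set_option maxHeartbeats 1000000 in
/-- Theorem 2 (approximation capacity of the "matrix" QRnet architecture). -/
theorem stmt_3 {n d : ℕ} (X : Set (Fin n → ℝ)) (hX : IsCompact X)
    (hstar : ∀ x ∈ X, ∀ s : ℝ, s ∈ Set.Icc (0 : ℝ) 1 → s • x ∈ X)
    (h0 : (0 : Fin n → ℝ) ∈ interior X)
    (f : (Fin n → ℝ) → (Fin d → ℝ))
    (hf : ContinuousOn f X) (hf0 : f 0 = 0)
    (hf1 : ∃ U ∈ nhds (0 : Fin n → ℝ), ContDiffOn ℝ 1 f U)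
    (S : Set ((Fin n → ℝ) → Matrix (Fin d) (Fin n) ℝ))
    (hS : ∀ N ∈ S, Continuous N)
    (hUA : ∀ h : (Fin n → ℝ) → Matrix (Fin d) (Fin n) ℝ, ContinuousOn h X →
      ∀ δ > 0, ∃ N ∈ S, ∀ x ∈ X, ∑ i, ∑ j, |h x i j - N x i j| < δ)
    (ε : ℝ) (hε : 0 < ε) :
    ∃ N ∈ S, ∀ x ∈ X,
      ∑ i, |f x i - (fderiv ℝ f 0 x i + ((N x - N 0).mulVec x) i)| < ε := by
  classical
  have hX0 : (0 : Fin n → ℝ) ∈ X := interior_subset h0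
  set L : (Fin n → ℝ) →L[ℝ] (Fin d → ℝ) := fderiv ℝ f 0 with hLdef
  set g : (Fin n → ℝ) → (Fin d → ℝ) := fun x => f x - L x with hgdef
  have hg0 : ∀ i, g 0 i = 0 := by
    intro i; simp [hgdef, hf0]
  have hgcont : ContinuousOn g X := hf.sub L.continuous.continuousOn
  -- bound on X
  obtain ⟨C, hC⟩ := isBounded_iff_forall_norm_le.mp hX.isBounded
  set R : ℝ := max C 0 with hRdef
  have hR0 : (0 : ℝ) ≤ R := le_max_right _ _
  have hR : ∀ x ∈ X, ∀ j, |x j| ≤ R := by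
    intro x hx j
    calc |x j| = ‖x j‖ := (Real.norm_eq_abs _).symm
      _ ≤ ‖x‖ := norm_le_pi_norm x j
      _ ≤ C := hC x hx
      _ ≤ R := le_max_left _ _
  -- small ball where g is small (in ℓ¹)
  set ε' : ℝ := ε / (3 * (d + 1)) with hε'def
  have hε'pos : 0 < ε' := by positivity
  have htend : Filter.Tendsto g (nhdsWithin 0 X) (nhds (g 0)) := hgcont 0 hX0
  obtain ⟨r, hr0, hrr⟩ := Metric.tendsto_nhdsWithin_nhds.mp htend ε' hε'pos
  have hsmall : ∀ x ∈ X, ‖x‖ < r → ∑ i, |g x i| ≤ ε / 3 := by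
    intro x hx hxr
    refine le_of_lt ?_
    have hgx : ‖g x‖ ≤ ε' := by
      have := hrr hx (by simpa [dist_zero_right] using hxr)
      have hg00 : g 0 = 0 := funext hg0
      rw [hg00, dist_zero_right] at this
      exact this.le
    calc ∑ i, |g x i| ≤ ∑ _i : Fin d, ‖g x‖ := by
          refine Finset.sum_le_sum fun i _ => ?_
          calc |g x i| = ‖g x i‖ := (Real.norm_eq_abs _).symm
            _ ≤ ‖g x‖ := norm_le_pi_norm (g x) i
      _ = (d : ℝ) * ‖g x‖ := by simp [Finset.sum_const, mul_comm]
      _ ≤ (d : ℝ) * ε' := by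
          exact mul_le_mul_of_nonneg_left hgx (by positivity)
      _ < ε / 3 := by
          rw [hε'def, mul_div_assoc', div_lt_div_iff₀ (by positivity) (by norm_num)]
          nlinarith [hε, Nat.cast_nonneg (α := ℝ) d]
  -- the auxiliary matrix-valued function
  set m : (Fin n → ℝ) → ℝ := fun x => max (∑ j, x j ^ 2) (r ^ 2) with hmdef
  have hm : ∀ x, 0 < m x := fun x => lt_of_lt_of_le (by positivity) (le_max_right _ _)
  set h : (Fin n → ℝ) → Matrix (Fin d) (Fin n) ℝ :=
    fun x => Matrix.of fun i j => g x i * x j / m x with hhdef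
  have hmcont : Continuous m := by
    exact (continuous_finset_sum _ fun j _ => (continuous_apply j).pow 2).max continuous_const
  have hhcont : ContinuousOn h X := by
    apply continuousOn_pi.mpr; intro i
    apply continuousOn_pi.mpr; intro j
    exact (((continuous_apply i).comp_continuousOn hgcont).mul
      (continuous_apply j).continuousOn).div hmcont.continuousOn (fun x _ => (hm x).ne')
  have hh0 : ∀ i j, h 0 i j = 0 := by
    intro i j; simp [hhdef, hg0 i]
  -- apply universal approximation
  set δ : ℝ := ε / (3 * (R + 1)) with hδdef
  have hδ0 : 0 < δ := by positivity
  obtain ⟨N, hNS, hNa⟩ := hUA h hhcont δ hδ0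
  have hRδ : R * δ < ε / 3 := by
    rw [hδdef]
    rw [mul_div_assoc', div_lt_div_iff₀ (by positivity) (by norm_num)]
    nlinarith [hε, hR0]
  refine ⟨N, hNS, ?_⟩
  intro x hx
  -- decomposition
  have key : ∀ i, f x i - (L x i + ((N x - N 0).mulVec x) i)
      = (g x i - ∑ j, h x i j * x j) + (∑ j, (h x i j - N x i j) * x j)
        + (∑ j, (N 0 i j - h 0 i j) * x j) := by
    intro i
    have e1 : (∑ j, (h x i j - N x i j) * x j) + (∑ j, (N 0 i j - h 0 i j) * x j)
        = (∑ j, h x i j * x j) - ∑ j, (N x i j - N 0 i j) * x j := by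
      rw [← Finset.sum_add_distrib, ← Finset.sum_sub_distrib]
      refine Finset.sum_congr rfl fun j _ => ?_
      rw [hh0 i j]; ring
    have e2 : ((N x - N 0).mulVec x) i = ∑ j, (N x i j - N 0 i j) * x j := by
      simp [Matrix.mulVec, dotProduct, Matrix.sub_apply]
    rw [add_assoc, e1, e2]
    simp only [hgdef, Pi.sub_apply]
    ring
  -- bounds on the three sums
  set s1 : ℝ := ∑ i, |g x i - ∑ j, h x i j * x j| with hs1def
  set s2 : ℝ := ∑ i, ∑ j, |h x i j - N x i j| * |x j| with hs2def
  set s3 : ℝ := ∑ i, ∑ j, |N 0 i j - h 0 i j| * |x j| with hs3def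
  have hsum : ∑ i, |f x i - (L x i + ((N x - N 0).mulVec x) i)| ≤ s1 + s2 + s3 := by
    rw [hs1def, hs2def, hs3def, ← Finset.sum_add_distrib, ← Finset.sum_add_distrib]
    refine Finset.sum_le_sum fun i _ => ?_
    rw [key i]
    calc |(g x i - ∑ j, h x i j * x j) + (∑ j, (h x i j - N x i j) * x j)
          + (∑ j, (N 0 i j - h 0 i j) * x j)|
        ≤ |g x i - ∑ j, h x i j * x j| + |∑ j, (h x i j - N x i j) * x j|
          + |∑ j, (N 0 i j - h 0 i j) * x j| := abs_add_three _ _ _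
      _ ≤ |g x i - ∑ j, h x i j * x j| + (∑ j, |h x i j - N x i j| * |x j|)
          + (∑ j, |N 0 i j - h 0 i j| * |x j|) := by
          gcongr
          · calc |∑ j, (h x i j - N x i j) * x j| ≤ ∑ j, |(h x i j - N x i j) * x j| :=
                Finset.abs_sum_le_sum_abs _ _
              _ = ∑ j, |h x i j - N x i j| * |x j| := by
                refine Finset.sum_congr rfl fun j _ => abs_mul _ _
          · calc |∑ j, (N 0 i j - h 0 i j) * x j| ≤ ∑ j, |(N 0 i j - h 0 i j) * x j| :=
                Finset.abs_sum_le_sum_abs _ _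
              _ = ∑ j, |N 0 i j - h 0 i j| * |x j| := by
                refine Finset.sum_congr rfl fun j _ => abs_mul _ _
  -- bound s1
  have hinner : ∀ i, ∑ j, h x i j * x j = g x i * ((∑ j, x j ^ 2) / m x) := by
    intro i
    calc ∑ j, h x i j * x j = ∑ j, g x i * x j ^ 2 / m x := by
          refine Finset.sum_congr rfl fun j _ => ?_
          show g x i * x j / m x * x j = _
          ring
      _ = (∑ j, g x i * x j ^ 2) / m x := by rw [Finset.sum_div]
      _ = g x i * (∑ j, x j ^ 2) / m x := by rw [← Finset.mul_sum]
      _ = g x i * ((∑ j, x j ^ 2) / m x) := mul_div_assoc _ _ _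
  have hs1 : s1 ≤ ε / 3 := by
    rcases le_or_gt (r ^ 2) (∑ j, x j ^ 2) with hc | hc
    · have hmx : m x = ∑ j, x j ^ 2 := max_eq_left hc
      have : ∀ i, |g x i - ∑ j, h x i j * x j| = 0 := by
        intro i
        rw [hinner i, hmx]
        have hpos : (0 : ℝ) < ∑ j, x j ^ 2 := lt_of_lt_of_le (by positivity) hc
        rw [div_self hpos.ne', mul_one, sub_self, abs_zero]
      rw [hs1def]
      simp only [this, Finset.sum_const, smul_zero]
      positivity
    · have hmx : m x = r ^ 2 := max_eq_right hc.le
      have hq0 : (0 : ℝ) ≤ (∑ j, x j ^ 2) / m x := by positivity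
      have hq1 : (∑ j, x j ^ 2) / m x ≤ 1 := by
        rw [div_le_one (hm x)]
        exact le_max_left _ _
      have hterm : ∀ i, |g x i - ∑ j, h x i j * x j| ≤ |g x i| := by
        intro i
        rw [hinner i]
        calc |g x i - g x i * ((∑ j, x j ^ 2) / m x)|
            = |g x i| * |1 - (∑ j, x j ^ 2) / m x| := by
              rw [← abs_mul]; ring_nf
          _ ≤ |g x i| * 1 := by
              refine mul_le_mul_of_nonneg_left ?_ (abs_nonneg _)
              rw [abs_of_nonneg (by linarith)]
              linarith
          _ = |g x i| := mul_one _
      have hxr : ‖x‖ < r := by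
        rcases n.eq_zero_or_pos with hn | hn
        · have : ‖x‖ = 0 := by
            simp [norm_eq_zero, funext_iff]
            intro i; exact absurd i.2 (by omega)
          rw [this]; exact hr0
        · rw [pi_norm_lt_iff hr0]
          intro j
          have hj : x j ^ 2 < r ^ 2 := by
            have hle : x j ^ 2 ≤ ∑ k, x k ^ 2 :=
              Finset.single_le_sum (f := fun k => x k ^ 2) (fun k _ => by positivity)
                (Finset.mem_univ j)
            linarith
          have := abs_lt_of_sq_lt_sq hj hr0.le
          simpa [Real.norm_eq_abs] using this
      calc s1 ≤ ∑ i, |g x i| := Finset.sum_le_sum fun i _ => hterm i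
        _ ≤ ε / 3 := hsmall x hx hxr
  -- bound s2
  have hbound2 : ∀ (y : (Fin n → ℝ)) (hy : y ∈ X),
      ∑ i, ∑ j, |h y i j - N y i j| * |x j| ≤ R * δ := by
    intro y hy
    calc ∑ i, ∑ j, |h y i j - N y i j| * |x j|
        ≤ ∑ i, ∑ j, |h y i j - N y i j| * R := by
          refine Finset.sum_le_sum fun i _ => Finset.sum_le_sum fun j _ => ?_
          exact mul_le_mul_of_nonneg_left (hR x hx j) (abs_nonneg _)
      _ = (∑ i, ∑ j, |h y i j - N y i j|) * R := by
          rw [Finset.sum_mul]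
          refine Finset.sum_congr rfl fun i _ => (Finset.sum_mul _ _ _).symm
      _ ≤ δ * R := mul_le_mul_of_nonneg_right (hNa y hy).le hR0
      _ = R * δ := mul_comm _ _
  have hs2 : s2 ≤ R * δ := hbound2 x hx
  have hs3 : s3 ≤ R * δ := by
    have := hbound2 0 hX0
    rw [hs3def]
    calc ∑ i, ∑ j, |N 0 i j - h 0 i j| * |x j|
        = ∑ i, ∑ j, |h 0 i j - N 0 i j| * |x j| := by
          refine Finset.sum_congr rfl fun i _ => Finset.sum_congr rfl fun j _ => ?_
          rw [abs_sub_comm]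
      _ ≤ R * δ := this
  calc ∑ i, |f x i - (L x i + ((N x - N 0).mulVec x) i)| ≤ s1 + s2 + s3 := hsum
    _ ≤ ε / 3 + R * δ + R * δ := by gcongr
    _ < ε := by linarith
end

section
/- Let X ⊂ ℝⁿ be compact, star-shaped with respect to 0, with 0 in its interior, and let f : X → ℝᵈ be continuous with f(0) = 0 and f continuously differentiable on a neighborhood of 0. Then for every ε > 0 there exists a continuous function h : X → ℝ^{d×n} with h(0) = 0 such that sup_{x ∈ X} ‖f(x) − [Df(0) + h(x)]x‖₁ < ε, where ‖·‖₁ is the ℓ¹ norm on ℝᵈ. -/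
/-- Key step in the proof of Theorem 2: continuous matrix-valued h with h(0)=0
approximating f(x) − Df(0)x as h(x)·x, uniformly on X. -/
theorem stmt_5 {n d : ℕ} (X : Set (Fin n → ℝ)) (hX : IsCompact X)
    (hstar : ∀ x ∈ X, ∀ s : ℝ, s ∈ Set.Icc (0 : ℝ) 1 → s • x ∈ X)
    (h0 : (0 : Fin n → ℝ) ∈ interior X)
    (f : (Fin n → ℝ) → (Fin d → ℝ))
    (hf : ContinuousOn f X) (hf0 : f 0 = 0)
    (hf1 : ∃ U ∈ nhds (0 : Fin n → ℝ), ContDiffOn ℝ 1 f U)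
    (ε : ℝ) (hε : 0 < ε) :
    ∃ h : (Fin n → ℝ) → Matrix (Fin d) (Fin n) ℝ,
      ContinuousOn h X ∧ h 0 = 0 ∧
      ∀ x ∈ X, ∑ i, |f x i - (fderiv ℝ f 0 x i + ((h x).mulVec x) i)| < ε := by
  classical
  set L := fderiv ℝ f 0 with hL
  set g : (Fin n → ℝ) → (Fin d → ℝ) := fun x => f x - L x with hg
  set S : (Fin n → ℝ) → ℝ := fun x => ∑ k, x k ^ 2 with hSdef
  -- positivity of S off 0
  have hSpos : ∀ x : Fin n → ℝ, x ≠ 0 → 0 < S x := by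
    intro x hx
    obtain ⟨k, hk⟩ : ∃ k, x k ≠ 0 := by
      by_contra hc
      push_neg at hc
      exact hx (funext hc)
    exact Finset.sum_pos' (fun k _ => sq_nonneg _) ⟨k, Finset.mem_univ k, by positivity⟩
  -- ‖x‖² ≤ S x
  have hSx : ∀ x : Fin n → ℝ, ‖x‖ ^ 2 ≤ S x := by
    intro x
    have h1 : ‖x‖ ≤ Real.sqrt (S x) := by
      apply pi_norm_le_iff_of_nonneg (Real.sqrt_nonneg _) |>.2
      intro i
      rw [Real.norm_eq_abs, ← Real.sqrt_sq_eq_abs]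
      exact Real.sqrt_le_sqrt (Finset.single_le_sum (fun k _ => sq_nonneg (x k)) (Finset.mem_univ i))
    calc ‖x‖ ^ 2 ≤ Real.sqrt (S x) ^ 2 := by
          exact pow_le_pow_left₀ (norm_nonneg _) h1 2
      _ = S x := Real.sq_sqrt (Finset.sum_nonneg fun k _ => sq_nonneg _)
  -- differentiability at 0
  obtain ⟨U, hU, hCD⟩ := hf1
  have hdiff : DifferentiableAt ℝ f 0 := (hCD.contDiffAt hU).differentiableAt one_ne_zero
  have hFD : HasFDerivAt f L 0 := hdiff.hasFDerivAt
  have hlo : (fun x => g x) =o[nhds (0 : Fin n → ℝ)] fun x => x := by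
    have := hasFDerivAt_iff_isLittleO_nhds_zero.mp hFD
    simpa [hg, hf0] using this
  have htend : Filter.Tendsto (fun x => ‖g x‖ / ‖x‖) (nhds 0) (nhds 0) := by
    refine (Asymptotics.isLittleO_iff_tendsto ?_).mp hlo.norm_norm
    intro x hx
    have : x = 0 := norm_eq_zero.mp hx
    simp [this, hg, hf0]
  -- the function h
    -- defined below
  refine ⟨fun x => Matrix.of fun i j => if x = 0 then 0 else g x i * x j / S x, ?_, ?_, ?_⟩
  · -- continuity on X
    intro x hx
    by_cases hx0 : x = 0
    · subst hx0
      apply continuousWithinAt_pi.2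
      intro i
      apply continuousWithinAt_pi.2
      intro j
      unfold ContinuousWithinAt
      have main : Filter.Tendsto (fun y => Matrix.of (fun i j => if y = 0 then (0:ℝ) else g y i * y j / S y) i j) (nhdsWithin (0 : Fin n → ℝ) X) (nhds 0) := by
        refine squeeze_zero_norm (a := fun y => ‖g y‖ / ‖y‖) ?_ ?_
        · intro y
          by_cases hy : y = 0
          · simp [hy]
          · have hSy := hSpos y hy
            have hny : 0 < ‖y‖ := norm_pos_iff.mpr hy
            simp only [Matrix.of_apply, if_neg hy]
            rw [Real.norm_eq_abs, abs_div, abs_of_pos hSy, abs_mul]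
            have h1 : |g y i| * |y j| ≤ ‖g y‖ * ‖y‖ := by
              apply mul_le_mul
              · exact norm_le_pi_norm (g y) i
              · exact norm_le_pi_norm y j
              · exact abs_nonneg _
              · exact norm_nonneg _
            have h2 : ‖y‖ ^ 2 ≤ S y := hSx y
            calc |g y i| * |y j| / S y ≤ ‖g y‖ * ‖y‖ / ‖y‖ ^ 2 :=
                div_le_div₀ (by positivity) h1 (by positivity) h2
              _ = ‖g y‖ / ‖y‖ := by
                field_simp
        · exact htend.mono_left nhdsWithin_le_nhds
      convert main using 2
      simp
    · -- away from 0
      have hC : ContinuousWithinAt (fun y => Matrix.of fun i j => g y i * y j / S y) X x := by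
        apply continuousWithinAt_pi.2
        intro i
        apply continuousWithinAt_pi.2
        intro j
        simp only [Matrix.of_apply]
        apply ContinuousWithinAt.div
        · apply ContinuousWithinAt.mul
          · have hfi : ContinuousWithinAt (fun y => f y i) X x :=
              (continuous_apply i).continuousAt.comp_continuousWithinAt (hf x hx)
            have hLi : ContinuousWithinAt (fun y => L y i) X x :=
              ((continuous_apply i).comp L.continuous).continuousWithinAt
            exact hfi.sub hLi
          · exact (continuous_apply j).continuousWithinAt
        · exact (continuous_finset_sum _ fun k _ => (continuous_apply k).pow 2).continuousWithinAt
        · exact (hSpos x hx0).ne'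
      apply hC.congr_of_eventuallyEq
      · have hmem : {y : Fin n → ℝ | y ≠ 0} ∈ nhdsWithin x X :=
          mem_nhdsWithin_of_mem_nhds (isOpen_compl_singleton.mem_nhds hx0)
        filter_upwards [hmem] with y hy
        ext i j
        simp [Matrix.of_apply, if_neg hy]
      · ext i j
        simp [Matrix.of_apply, if_neg hx0]
  · ext i j
    simp
  · intro x hx
    by_cases hx0 : x = 0
    · subst hx0
      simpa [hf0, Matrix.mulVec_zero] using hε
    · have hSy := hSpos x hx0
      have key : ∀ i, ((Matrix.of fun i j => if x = 0 then (0:ℝ) else g x i * x j / S x).mulVec x) i = g x i := by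
        intro i
        simp only [Matrix.mulVec, dotProduct, Matrix.of_apply, if_neg hx0]
        have : ∑ j, g x i * x j / S x * x j = g x i / S x * ∑ j, x j ^ 2 := by
          rw [Finset.mul_sum]
          apply Finset.sum_congr rfl
          intro j _
          ring
        rw [this]
        rw [div_mul_eq_mul_div, mul_div_assoc, div_self hSy.ne', mul_one]
      have : ∀ i, f x i - (L x i + g x i) = 0 := by
        intro i
        simp [hg]
      simp only [key, this, abs_zero, Finset.sum_const_zero]
      exact hε
end

section
/- Let x_f ∈ ℝⁿ, u_f ∈ ℝᵐ, and let K be an m×n real matrix. Let σ : ℝᵐ → ℝᵐ be continuously differentiable with σ(u_f) = u_f and Fréchet derivative at u_f equal to the identity map. Let s : ℝᵐ → ℝᵐ be any function that equals the identity on some neighborhood of u_f. Let N : ℝⁿ → ℝᵐ be continuously differentiable with Jacobian DN. Define û : ℝⁿ → ℝᵐ by û(x) = σ( s(u_f − K(x − x_f)) − [DN(x_f)](x − x_f) + N(x) − N(x_f) ). Then û(x_f) = u_f and the Fréchet derivative of û at x_f is the linear map x ↦ −K·x. -/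
/-- u_Jac-QRnet (18) equals u_f at x_f and its Fréchet derivative there is x ↦ −K·x. -/
theorem stmt_12 {n m : ℕ} (x_f : Fin n → ℝ) (u_f : Fin m → ℝ)
    (K : Matrix (Fin m) (Fin n) ℝ)
    (σ : (Fin m → ℝ) → (Fin m → ℝ)) (hσ : ContDiff ℝ 1 σ)
    (hσf : σ u_f = u_f)
    (hσd : fderiv ℝ σ u_f = ContinuousLinearMap.id ℝ (Fin m → ℝ))
    (s : (Fin m → ℝ) → (Fin m → ℝ))
    (hs : ∀ᶠ u in nhds u_f, s u = u)
    (N : (Fin n → ℝ) → (Fin m → ℝ)) (hN : ContDiff ℝ 1 N)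
    (u_hat : (Fin n → ℝ) → (Fin m → ℝ))
    (hu : ∀ x, u_hat x = σ (s (u_f - K.mulVec (x - x_f))
      - fderiv ℝ N x_f (x - x_f) + N x - N x_f)) :
    u_hat x_f = u_f ∧
      HasFDerivAt u_hat
        (-(LinearMap.toContinuousLinearMap (Matrix.mulVecLin K))) x_f := by
  set L : (Fin n → ℝ) →L[ℝ] (Fin m → ℝ) :=
    LinearMap.toContinuousLinearMap (Matrix.mulVecLin K) with hLdef
  have hLapp : ∀ v, L v = K.mulVec v := fun v => rfl
  set D := fderiv ℝ N x_f with hDdef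
  have hNd : HasFDerivAt N D x_f := (hN.differentiable one_ne_zero x_f).hasFDerivAt
  -- value at x_f
  have h0 : u_hat x_f = u_f := by
    rw [hu]
    simp [sub_self, Matrix.mulVec_zero, sub_zero, map_zero, hs.self_of_nhds, hσf]
  refine ⟨h0, ?_⟩
  -- derivative of x ↦ x - x_f
  have h1 : HasFDerivAt (fun x : Fin n → ℝ => x - x_f)
      (ContinuousLinearMap.id ℝ (Fin n → ℝ)) x_f :=
    (hasFDerivAt_id x_f).sub_const x_f
  have h2 : HasFDerivAt (fun x => L (x - x_f)) L x_f := by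
    simpa only [ContinuousLinearMap.comp_id, Function.comp_def] using L.hasFDerivAt.comp x_f h1
  have h3 : HasFDerivAt (fun x => u_f - K.mulVec (x - x_f)) (-L) x_f := by
    simpa only [zero_sub, Pi.sub_def, hLapp] using (hasFDerivAt_const u_f x_f).sub h2
  have h4 : HasFDerivAt (fun x => D (x - x_f)) D x_f := by
    simpa only [ContinuousLinearMap.comp_id, Function.comp_def] using D.hasFDerivAt.comp x_f h1
  -- inner function without saturation
  have hG : HasFDerivAt
      (fun x => u_f - K.mulVec (x - x_f) - D (x - x_f) + N x - N x_f) (-L) x_f := by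
    have := ((h3.sub h4).add hNd).sub_const (N x_f)
    rw [show -L - D + D = -L by abel] at this
    exact this
  -- σ has derivative id at u_f
  have hσAt : HasFDerivAt σ (ContinuousLinearMap.id ℝ (Fin m → ℝ)) u_f := by
    have := (hσ.differentiable one_ne_zero u_f).hasFDerivAt
    rwa [hσd] at this
  -- value of inner function at x_f is u_f
  have hGval : (fun x => u_f - K.mulVec (x - x_f) - D (x - x_f) + N x - N x_f) x_f
      = u_f := by
    simp
  have hComp : HasFDerivAt
      (fun x => σ (u_f - K.mulVec (x - x_f) - D (x - x_f) + N x - N x_f)) (-L) x_f := by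
    have := (hGval ▸ hσAt).comp x_f hG
    simpa only [ContinuousLinearMap.id_comp, Function.comp_def] using this
  -- eventually, s is the identity on the LQR term
  have hcont : Filter.Tendsto (fun x => u_f - K.mulVec (x - x_f)) (nhds x_f)
      (nhds u_f) := by
    have := h3.differentiableAt.continuousAt
    simpa only [ContinuousAt, sub_self, Matrix.mulVec_zero, sub_zero] using this
  have hev : ∀ᶠ x in nhds x_f,
      s (u_f - K.mulVec (x - x_f)) = u_f - K.mulVec (x - x_f) := hcont.eventually hs
  have hEq : u_hat =ᶠ[nhds x_f]
      fun x => σ (u_f - K.mulVec (x - x_f) - D (x - x_f) + N x - N x_f) := by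
    filter_upwards [hev] with x hx
    rw [hu, hx]
  exact hComp.congr_of_eventuallyEq hEq
end
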